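/- If M is the unique indecomposable object (up to isomorphism) of a wide subcategory W of mod-Λ, then M is Schurian and W = E(M), the category of iterated self-extensions of M. -/

import Mathlib

open scoped BigOperators

noncomputable section

/-- Dot product of a real vector with a dimension vector. -/
def dprod {n : ℕ} (x : Fin n → ℝ) (v : Fin n → ℕ) : ℝ := ∑ i, x i * (v i : ℝ)

/-- Slope of a dimension vector with respect to a linear stability function
`Z(x) = a·x + i b·x`. -/
def zslope {n : ℕ} (a b : Fin n → ℝ) (v : Fin n → ℕ) : ℝ := dprod a v / dprod b v

/-- The semistability set `D(M)` of a module `M`, with respect to a dimension-vector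
assignment `d`. -/
def DSet {Λ : Type} [Ring Λ] {n : ℕ}
    (d : (N : Type) → [AddCommGroup N] → [Module Λ N] → Fin n → ℕ)
    (M : Type) [AddCommGroup M] [Module Λ M] : Set (Fin n → ℝ) :=
  {x | dprod x (d M) = 0 ∧ ∀ M' : Submodule Λ M, dprod x (d ↥M') ≤ 0}

/-- A module is Schurian if it is nonzero and every nonzero endomorphism is invertible,
i.e. its endomorphism ring is a division algebra. -/
def Schurian (Λ : Type) [Ring Λ] (M : Type) [AddCommGroup M] [Module Λ M] : Prop :=
  (∃ y : M, y ≠ 0) ∧ ∀ f : M →ₗ[Λ] M, f ≠ 0 → Function.Bijective f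

/-- `X` belongs to `E(M)`: `X` admits a finite filtration with all subquotients
isomorphic to `M`. -/
def IsFiltered (Λ : Type) [Ring Λ] (M : Type) [AddCommGroup M] [Module Λ M]
    (X : Type) [AddCommGroup X] [Module Λ X] : Prop :=
  ∃ (k : ℕ) (F : Fin (k + 1) → Submodule Λ X), Monotone F ∧ F 0 = ⊥ ∧ F (Fin.last k) = ⊤ ∧
    ∀ i : Fin k, Nonempty
      ((↥(F i.succ) ⧸ Submodule.comap (F i.succ).subtype (F i.castSucc)) ≃ₗ[Λ] M)

/-- Slope at time `t` of a dimension vector, for a nonlinear stability function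
`Z_t(x) = a_t·x + i b_t·x`. -/
def muZ {n : ℕ} (a b : ℝ → Fin n → ℝ) (t : ℝ) (v : Fin n → ℕ) : ℝ :=
  dprod (a t) v / dprod (b t) v

/-- `M` is `Z_t`-semistable: every nonzero submodule has zslope at least that of `M`. -/
def Semistable {Λ : Type} [Ring Λ] {n : ℕ}
    (d : (N : Type) → [AddCommGroup N] → [Module Λ N] → Fin n → ℕ)
    (a b : ℝ → Fin n → ℝ) (t : ℝ)
    (M : Type) [AddCommGroup M] [Module Λ M] : Prop :=
  ∀ M' : Submodule Λ M, M' ≠ ⊥ → muZ a b t (d M) ≤ muZ a b t (d ↥M')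

/-- The nonlinear stability function given by `(a, b)` is green (for `Λ`): at every
semistable pair `(N, t₀)` (with `N` a nonzero finite-length `Λ`-module, `N`
`Z_{t₀}`-semistable and `μ_{t₀}(N) = t₀`), the derivative of `t ↦ μ_t(N)` at `t₀`
is `< 1`. -/
def ZGreen {Λ : Type} [Ring Λ] {n : ℕ}
    (d : (N : Type) → [AddCommGroup N] → [Module Λ N] → Fin n → ℕ)
    (a b : ℝ → Fin n → ℝ) : Prop :=
  ∀ (N : Type) [AddCommGroup N] [Module Λ N] [IsNoetherian Λ N] [IsArtinian Λ N] (t₀ : ℝ),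
    (∃ y : N, y ≠ 0) → Semistable d a b t₀ N → muZ a b t₀ (d N) = t₀ →
      deriv (fun t => muZ a b t (d N)) t₀ < 1

/-- `t₀(M)`: the smallest `t` with `μ_t(M) = t` (as an infimum). -/
def tzero {n : ℕ} (a b : ℝ → Fin n → ℝ) (v : Fin n → ℕ) : ℝ := sInf {t | muZ a b t v = t}

/-- `t₁(M)`: the smallest value of `t₀(M')` over nonzero submodules `M' ⊆ M`. -/
def tone {Λ : Type} [Ring Λ] {n : ℕ}
    (d : (N : Type) → [AddCommGroup N] → [Module Λ N] → Fin n → ℕ)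
    (a b : ℝ → Fin n → ℝ)
    (M : Type) [AddCommGroup M] [Module Λ M] : ℝ :=
  sInf {s : ℝ | ∃ M' : Submodule Λ M, M' ≠ ⊥ ∧ s = tzero a b (d ↥M')}

/-- A module is indecomposable: it is nonzero and admits no nontrivial direct sum
decomposition. -/
def Indecomposable' (Λ : Type) [Ring Λ] (X : Type) [AddCommGroup X] [Module Λ X] : Prop :=
  (∃ y : X, y ≠ 0) ∧ ∀ A B : Submodule Λ X, IsCompl A B → A = ⊥ ∨ B = ⊥

section Aux
variable {Λ : Type} [Ring Λ]

/-- A linear equivalence between any two subsingleton modules. -/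
def zeroEquiv (A B : Type) [AddCommGroup A] [Module Λ A] [AddCommGroup B] [Module Λ B]
    [Subsingleton A] [Subsingleton B] : A ≃ₗ[Λ] B where
  toFun _ := 0
  map_add' := by intros; simp
  map_smul' := by intros; simp
  invFun _ := 0
  left_inv x := Subsingleton.elim _ _
  right_inv x := Subsingleton.elim _ _

/-- Comparison of subquotients along a surjective map. -/
lemma quotComap {X Y : Type} [AddCommGroup X] [Module Λ X] [AddCommGroup Y] [Module Λ Y]
    (q : X →ₗ[Λ] Y) (hq : Function.Surjective q) (A B : Submodule Λ Y) :
    Nonempty ((↥(Submodule.comap q B) ⧸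
        Submodule.comap (Submodule.comap q B).subtype (Submodule.comap q A)) ≃ₗ[Λ]
      (↥B ⧸ Submodule.comap B.subtype A)) := by
  set g : ↥(Submodule.comap q B) →ₗ[Λ] ↥B := q.restrict (fun x hx => hx) with hg
  set h := (Submodule.comap B.subtype A).mkQ ∘ₗ g with hh
  have hsurj : Function.Surjective h := by
    apply Function.Surjective.comp (Submodule.mkQ_surjective _)
    rintro ⟨b, hb⟩
    obtain ⟨x, rfl⟩ := hq b
    exact ⟨⟨x, hb⟩, rfl⟩
  have hker : LinearMap.ker h
      = Submodule.comap (Submodule.comap q B).subtype (Submodule.comap q A) := by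
    ext x
    simp [hh, hg, LinearMap.mem_ker, Submodule.Quotient.mk_eq_zero, LinearMap.restrict_apply,
      Submodule.mem_comap]
  exact ⟨(Submodule.quotEquivOfEq _ _ hker.symm).trans (h.quotKerEquivOfSurjective hsurj)⟩

lemma isFiltered_of_equiv (M : Type) [AddCommGroup M] [Module Λ M]
    {X Y : Type} [AddCommGroup X] [Module Λ X] [AddCommGroup Y] [Module Λ Y]
    (e : X ≃ₗ[Λ] Y) (hY : IsFiltered Λ M Y) : IsFiltered Λ M X := by
  obtain ⟨k, F, hmono, h0, hlast, hsub⟩ := hY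
  refine ⟨k, fun i => Submodule.comap (e : X →ₗ[Λ] Y) (F i),
    fun i j hij => Submodule.comap_mono (hmono hij), ?_, ?_, ?_⟩
  · show Submodule.comap (e : X →ₗ[Λ] Y) (F 0) = ⊥
    rw [h0, Submodule.comap_bot, LinearEquiv.ker]
  · show Submodule.comap (e : X →ₗ[Λ] Y) (F (Fin.last k)) = ⊤
    rw [hlast, Submodule.comap_top]
  · intro i
    obtain ⟨e'⟩ := quotComap (e : X →ₗ[Λ] Y) e.surjective (F i.castSucc) (F i.succ)
    exact ⟨e'.trans (hsub i).some⟩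

lemma isFiltered_of_subsingleton (M : Type) [AddCommGroup M] [Module Λ M]
    (Z : Type) [AddCommGroup Z] [Module Λ Z] [Subsingleton Z] : IsFiltered Λ M Z := by
  haveI : Subsingleton (Submodule Λ Z) := (Submodule.subsingleton_iff Λ).mpr inferInstance
  exact ⟨0, fun _ => ⊥, monotone_const, rfl, Subsingleton.elim _ _, fun i => i.elim0⟩

lemma isFiltered_extension (M : Type) [AddCommGroup M] [Module Λ M]
    {X : Type} [AddCommGroup X] [Module Λ X] (S : Submodule Λ X)
    (hS : Nonempty (↥S ≃ₗ[Λ] M)) (hQ : IsFiltered Λ M (X ⧸ S)) : IsFiltered Λ M X := by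
  obtain ⟨k, F, hmono, h0, hlast, hsub⟩ := hQ
  refine ⟨k + 1, Fin.cases ⊥ (fun i => Submodule.comap S.mkQ (F i)), ?_, ?_, ?_, ?_⟩
  · intro i j hij
    induction i using Fin.cases with
    | zero => simp
    | succ i =>
      induction j using Fin.cases with
      | zero => exact absurd (Fin.le_zero_iff.mp hij) (Fin.succ_ne_zero i)
      | succ j =>
        simp only [Fin.cases_succ]
        exact Submodule.comap_mono (hmono (Fin.succ_le_succ_iff.mp hij))
  · simp
  · rw [show (Fin.last (k+1)) = (Fin.last k).succ from (Fin.succ_last k).symm]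
    simp only [Fin.cases_succ]
    show Submodule.comap S.mkQ (F (Fin.last k)) = ⊤
    rw [hlast, Submodule.comap_top]
  · intro i
    induction i using Fin.cases with
    | zero =>
      simp only [Fin.castSucc_zero, Fin.cases_succ, Fin.cases_zero]
      have h2 : Submodule.comap S.mkQ (F 0) = S := by
        rw [h0, Submodule.comap_bot, Submodule.ker_mkQ]
      have h3 : Submodule.comap (Submodule.comap S.mkQ (F 0)).subtype
          (⊥ : Submodule Λ X) = ⊥ := by
        rw [Submodule.comap_bot, Submodule.ker_subtype]
      exact ⟨(Submodule.quotEquivOfEqBot _ h3).trans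
        ((LinearEquiv.ofEq _ _ h2).trans hS.some)⟩
    | succ j =>
      simp only [← Fin.succ_castSucc, Fin.cases_succ]
      obtain ⟨e'⟩ := quotComap S.mkQ (Submodule.mkQ_surjective S) (F j.castSucc) (F j.succ)
      exact ⟨e'.trans (hsub j).some⟩

end Aux

/-- If `M` is the unique indecomposable object (up to isomorphism) of a wide
subcategory `W` of `mod-Λ` (here a class `P` of finite-length modules, closed under
isomorphism, summands, extensions, kernels and cokernels), then `M` is Schurian and
`W = E(M)`, the category of iterated self-extensions of `M`. -/
theorem stmt8 (Λ : Type) [Ring Λ]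
    (P : (N : Type) → [AddCommGroup N] → [Module Λ N] → Prop)
    (hfin : ∀ (N : Type) [AddCommGroup N] [Module Λ N],
      P N → IsNoetherian Λ N ∧ IsArtinian Λ N)
    (hisoP : ∀ (N N' : Type) [AddCommGroup N] [Module Λ N] [AddCommGroup N'] [Module Λ N'],
      (N ≃ₗ[Λ] N') → P N → P N')
    (hsum : ∀ (A B : Type) [AddCommGroup A] [Module Λ A] [AddCommGroup B] [Module Λ B],
      P (A × B) → P A)
    (hext : ∀ (E : Type) [AddCommGroup E] [Module Λ E] (A : Submodule Λ E),
      P ↥A → P (E ⧸ A) → P E)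
    (hker : ∀ (A B : Type) [AddCommGroup A] [Module Λ A] [AddCommGroup B] [Module Λ B]
      (f : A →ₗ[Λ] B), P A → P B → P ↥(LinearMap.ker f))
    (hcoker : ∀ (A B : Type) [AddCommGroup A] [Module Λ A] [AddCommGroup B] [Module Λ B]
      (f : A →ₗ[Λ] B), P A → P B → P (B ⧸ LinearMap.range f))
    (M : Type) [AddCommGroup M] [Module Λ M]
    (hMP : P M) (hMind : Indecomposable' Λ M)
    (huniq : ∀ (N : Type) [AddCommGroup N] [Module Λ N],
      P N → Indecomposable' Λ N → Nonempty (N ≃ₗ[Λ] M)) :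
    Schurian Λ M ∧
      ∀ (X : Type) [AddCommGroup X] [Module Λ X], (P X ↔ IsFiltered Λ M X) := by
  classical
  haveI hMn : IsNoetherian Λ M := (hfin M hMP).1
  haveI hMa : IsArtinian Λ M := (hfin M hMP).2
  have lemA : ∀ (N : Type) [AddCommGroup N] [Module Λ N], P N → (∃ y : N, y ≠ 0) →
      ∃ T : Submodule Λ N, T ≠ ⊥ ∧ Nonempty (↥T ≃ₗ[Λ] M) := by
    intro N _ _ hPN hN0
    haveI : IsArtinian Λ N := (hfin N hPN).2
    have claim : ∀ S : Submodule Λ N, S ≠ ⊥ → P ↥S →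
        ∃ T : Submodule Λ N, T ≠ ⊥ ∧ Nonempty (↥T ≃ₗ[Λ] M) := by
      refine fun S => IsArtinian.induction
        (P := fun S => S ≠ ⊥ → P ↥S → ∃ T : Submodule Λ N, T ≠ ⊥ ∧ Nonempty (↥T ≃ₗ[Λ] M))
        (fun S IH hSne hPS => ?_) S
      by_cases hind : Indecomposable' Λ ↥S
      · exact ⟨S, hSne, huniq ↥S hPS hind⟩
      · have hne : ∃ y : ↥S, y ≠ 0 := by
          obtain ⟨x, hx, hx0⟩ := (Submodule.ne_bot_iff S).mp hSne
          exact ⟨⟨x, hx⟩, fun h => hx0 (congrArg Subtype.val h)⟩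
        unfold Indecomposable' at hind
        push_neg at hind
        obtain ⟨A, B, hAB, hA, hB⟩ := hind hne
        have hPA : P ↥A := hsum ↥A ↥B
          (hisoP ↥S (↥A × ↥B) (Submodule.prodEquivOfIsCompl A B hAB).symm hPS)
        have hlt : A.map S.subtype < S := by
          refine lt_of_le_of_ne (Submodule.map_subtype_le S A) ?_
          intro heq
          have hA_top : A = ⊤ :=
            Submodule.map_injective_of_injective S.injective_subtype
              (heq.trans (Submodule.map_subtype_top S).symm)
          exact hB (hAB.symm.disjoint.eq_bot_of_le (by rw [hA_top]; exact le_top))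
        have hmapne : A.map S.subtype ≠ ⊥ := by
          obtain ⟨a, ha, ha0⟩ := (Submodule.ne_bot_iff A).mp hA
          exact (Submodule.ne_bot_iff _).mpr
            ⟨(a : N), Submodule.mem_map_of_mem ha,
              fun h => ha0 (Subtype.coe_injective h)⟩
        have hPmap : P ↥(A.map S.subtype) :=
          hisoP ↥A _ (Submodule.equivMapOfInjective S.subtype S.injective_subtype A) hPA
        exact IH _ hlt hmapne hPmap
    refine claim ⊤ ?_ (hisoP N ↥(⊤ : Submodule Λ N) Submodule.topEquiv.symm hPN)
    obtain ⟨y, hy⟩ := hN0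
    exact (Submodule.ne_bot_iff _).mpr ⟨y, trivial, hy⟩
  have schur : Schurian Λ M := by
    refine ⟨hMind.1, ?_⟩
    intro f hf
    have hinj : Function.Injective f := by
      by_contra hninj
      have hnsurj : ¬Function.Surjective f :=
        fun hs => hninj (IsNoetherian.injective_of_surjective_endomorphism f hs)
      have hrne : LinearMap.range f ≠ ⊤ := fun h => hnsurj (LinearMap.range_eq_top.mp h)
      have hPr : P ↥(LinearMap.range f) :=
        hisoP _ _ (LinearEquiv.ofEq _ _ (Submodule.ker_mkQ (LinearMap.range f)))
          (hker M (M ⧸ LinearMap.range f) (LinearMap.range f).mkQ hMP (hcoker M M f hMP hMP))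
      have hr0 : ∃ y : ↥(LinearMap.range f), y ≠ 0 := by
        obtain ⟨x, hx⟩ := DFunLike.ne_iff.mp hf
        exact ⟨⟨f x, LinearMap.mem_range_self f x⟩, fun h => hx (congrArg Subtype.val h)⟩
      obtain ⟨T, hTne, ⟨eT⟩⟩ := lemA ↥(LinearMap.range f) hPr hr0
      set T' := T.map (LinearMap.range f).subtype with hT'
      have e2 : M ≃ₗ[Λ] ↥T' := eT.symm.trans
        (Submodule.equivMapOfInjective (LinearMap.range f).subtype
          (LinearMap.range f).injective_subtype T)
      set g : M →ₗ[Λ] M := T'.subtype ∘ₗ e2.toLinearMap with hg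
      have hginj : Function.Injective g := T'.injective_subtype.comp e2.injective
      have hgsurj := IsArtinian.surjective_of_injective_endomorphism g hginj
      have htop : T' = ⊤ := by
        rw [eq_top_iff]
        intro x _
        obtain ⟨y, hy⟩ := hgsurj x
        have hmem : g y ∈ T' := (e2 y).2
        rwa [hy] at hmem
      have hle : T' ≤ LinearMap.range f := Submodule.map_subtype_le _ _
      rw [htop] at hle
      exact hrne (top_le_iff.mp hle)
    exact ⟨hinj, IsArtinian.surjective_of_injective_endomorphism f hinj⟩
  refine ⟨schur, ?_⟩
  intro X _ _
  constructor
  · intro hPX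
    haveI : IsNoetherian Λ X := (hfin X hPX).1
    haveI : IsArtinian Λ X := (hfin X hPX).2
    have key : ∀ S : Submodule Λ X, P (X ⧸ S) → IsFiltered Λ M (X ⧸ S) := by
      refine fun S => IsNoetherian.induction
        (P := fun S => P (X ⧸ S) → IsFiltered Λ M (X ⧸ S))
        (fun S IH hPQ => ?_) S
      by_cases hS : S = ⊤
      · haveI : Subsingleton (X ⧸ S) := Submodule.Quotient.subsingleton_iff.mpr hS
        exact isFiltered_of_subsingleton M _
      · have hne : ∃ y : X ⧸ S, y ≠ 0 := by
          obtain ⟨x, hx⟩ : ∃ x : X, x ∉ S := by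
            by_contra h; push_neg at h; exact hS (Submodule.eq_top_iff'.mpr h)
          exact ⟨Submodule.Quotient.mk x, fun h => hx ((Submodule.Quotient.mk_eq_zero S).mp h)⟩
        obtain ⟨T, hTne, hTe⟩ := lemA (X ⧸ S) hPQ hne
        have hle : S ≤ Submodule.comap S.mkQ T := by
          intro x hx
          show S.mkQ x ∈ T
          rw [Submodule.mkQ_apply, (Submodule.Quotient.mk_eq_zero S).mpr hx]
          exact zero_mem T
        have hlt : S < Submodule.comap S.mkQ T := by
          refine lt_of_le_of_ne hle ?_
          intro heq
          obtain ⟨t, ht, ht0⟩ := (Submodule.ne_bot_iff T).mp hTne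
          obtain ⟨x, rfl⟩ := Submodule.mkQ_surjective S t
          have hxS : x ∈ Submodule.comap S.mkQ T := ht
          rw [← heq] at hxS
          exact ht0 (by rw [Submodule.mkQ_apply]; exact (Submodule.Quotient.mk_eq_zero S).mpr hxS)
        have hmap : Submodule.map S.mkQ (Submodule.comap S.mkQ T) = T := by
          rw [Submodule.map_comap_eq, Submodule.range_mkQ, top_inf_eq]
        have hPT : P ((X ⧸ S) ⧸ T) :=
          hisoP _ _ (Submodule.quotEquivOfEq _ _ (Submodule.range_subtype T))
            (hcoker ↥T (X ⧸ S) T.subtype (hisoP M ↥T hTe.some.symm hMP) hPQ)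
        have e3 : ((X ⧸ S) ⧸ T) ≃ₗ[Λ] X ⧸ (Submodule.comap S.mkQ T) :=
          (Submodule.quotEquivOfEq _ _ hmap.symm).trans
            (Submodule.quotientQuotientEquivQuotient S _ hle)
        have hfilt' := IH _ hlt (hisoP _ _ e3 hPT)
        exact isFiltered_extension M T hTe (isFiltered_of_equiv M e3 hfilt')
    have h0 := key ⊥
      (hisoP X (X ⧸ (⊥ : Submodule Λ X)) (Submodule.quotEquivOfEqBot ⊥ rfl).symm hPX)
    exact isFiltered_of_equiv M (Submodule.quotEquivOfEqBot ⊥ rfl).symm h0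
  · rintro ⟨k, F, hmono, h0, hlast, hsub⟩
    have hbotM : P ↥(⊥ : Submodule Λ M) :=
      hisoP _ _ (LinearEquiv.ofEq _ _ LinearMap.ker_id) (hker M M LinearMap.id hMP hMP)
    have hall : ∀ i : Fin (k+1), P ↥(F i) := by
      intro i
      induction i using Fin.induction with
      | zero =>
        rw [h0]
        exact hisoP _ _ (zeroEquiv ↥(⊥ : Submodule Λ M) ↥(⊥ : Submodule Λ X)) hbotM
      | succ i ih =>
        exact hext ↥(F i.succ) (Submodule.comap (F i.succ).subtype (F i.castSucc))
          (hisoP _ _ (Submodule.comapSubtypeEquivOfLe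
            (hmono (Fin.castSucc_lt_succ (i := i)).le)).symm ih)
          (hisoP M _ (hsub i).some.symm hMP)
    have hh := hall (Fin.last k)
    rw [hlast] at hh
    exact hisoP _ _ Submodule.topEquiv hh
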